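/- Fix q₀ ∈ U such that K(q₀) is invertible. Then the real directional derivative of the first component z¹ of z at q₀ along the radial vector q₀ itself vanishes, i.e. (fderiv ℝ z¹ q₀)(q₀) = 0, if and only if the determinant of the m×m matrix obtained from K(q₀) by replacing its first column with the vector h(z(q₀)) is zero. -/

import Mathlib

open Matrix

theorem radial_reduction_iff_det_vanishes
    /- Invariance of `z¹` along the radial direction `q₀` is equivalent to the
       vanishing of `det K(q₀)` with first column replaced by `h(z(q₀))`. -/
    (m : ℕ) (hm : 2 ≤ m)
    (V : Set (Fin m → ℂ)) (hV : IsOpen V)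
    (M : (Fin m → ℂ) → Matrix (Fin m) (Fin m) ℂ)
    (hM : ∀ i j, DifferentiableOn ℂ (fun ζ => M ζ i j) V)
    (hManti : ∀ ζ ∈ V, (M ζ)ᵀ = -(M ζ))
    (h : (Fin m → ℂ) → (Fin m → ℂ))
    (hh : ∀ i, DifferentiableOn ℂ (fun ζ => h ζ i) V)
    (F : (Fin m → ℂ) → (Fin m → ℂ) → (Fin m → ℂ))
    (hF : ∀ q ζ, F q ζ =
      fun i => q i - (∑ j, M ζ i j * (starRingEnd ℂ) (q j)) - h ζ i)
    (U : Set (Fin m → ℂ)) (hU : IsOpen U)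
    (z : (Fin m → ℂ) → (Fin m → ℂ))
    (hzV : ∀ q ∈ U, z q ∈ V)
    (hzF : ∀ q ∈ U, F q (z q) = 0)
    (hzdiff : DifferentiableOn ℝ z U)
    (K : (Fin m → ℂ) → Matrix (Fin m) (Fin m) ℂ)
    (hK : ∀ q ∈ U, ∀ i j, K q i j =
      fderiv ℂ (fun ζ => F q ζ i) (z q) (Pi.single j 1))
    (q₀ : Fin m → ℂ) (hq₀ : q₀ ∈ U)
    (hKinv : IsUnit (K q₀).det) :
    fderiv ℝ (fun q => z q (⟨0, by omega⟩ : Fin m)) q₀ q₀ = 0 ↔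
      (Matrix.updateCol (K q₀) (⟨0, by omega⟩ : Fin m) (h (z q₀))).det = 0 := by
  have hζ₀V : z q₀ ∈ V := hzV q₀ hq₀
  set ζ₀ := z q₀ with hζ₀
  have hz : DifferentiableAt ℝ z q₀ := hzdiff.differentiableAt (hU.mem_nhds hq₀)
  set Dz := fderiv ℝ z q₀ with hDzdef
  have hzd : HasFDerivAt z Dz q₀ := hz.hasFDerivAt
  set w := Dz q₀ with hwdef
  -- differentiability of M and h at ζ₀
  have hMd : ∀ i j, DifferentiableAt ℂ (fun ζ => M ζ i j) ζ₀ := fun i j =>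
    (hM i j).differentiableAt (hV.mem_nhds hζ₀V)
  have hhd : ∀ i, DifferentiableAt ℂ (fun ζ => h ζ i) ζ₀ := fun i =>
    (hh i).differentiableAt (hV.mem_nhds hζ₀V)
  set DM : Fin m → Fin m → ((Fin m → ℂ) →L[ℂ] ℂ) :=
    fun i j => fderiv ℂ (fun ζ => M ζ i j) ζ₀ with hDMdef
  set Dh : Fin m → ((Fin m → ℂ) →L[ℂ] ℂ) :=
    fun i => fderiv ℂ (fun ζ => h ζ i) ζ₀ with hDhdef
  set L : Fin m → ((Fin m → ℂ) →L[ℂ] ℂ) :=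
    fun i => -(∑ k, (starRingEnd ℂ) (q₀ k) • DM i k) - Dh i with hLdef
  -- evaluation of a complex-linear functional via basis vectors
  have eval : ∀ (T : (Fin m → ℂ) →L[ℂ] ℂ) (v : Fin m → ℂ),
      T v = ∑ j, v j * T (Pi.single j 1) := by
    intro T v
    have hv : v = ∑ j, v j • (Pi.single j 1 : Fin m → ℂ) := by
      funext k
      simp [Finset.sum_apply, Pi.single_apply]
    conv_lhs => rw [hv]
    rw [map_sum]
    simp [smul_eq_mul]
  -- complex derivative of F q₀ · at ζ₀
  have hFd : ∀ i, HasFDerivAt (fun ζ => F q₀ ζ i) (L i) ζ₀ := by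
    intro i
    have hfun : (fun ζ => F q₀ ζ i) =
        fun ζ => q₀ i - (∑ k, M ζ i k * (starRingEnd ℂ) (q₀ k)) - h ζ i := by
      funext ζ; rw [hF]
    rw [hfun]
    have hSum : HasFDerivAt (fun ζ => ∑ k, M ζ i k * (starRingEnd ℂ) (q₀ k))
        (∑ k, (starRingEnd ℂ) (q₀ k) • DM i k) ζ₀ :=
      HasFDerivAt.fun_sum fun k _ => (hMd i k).hasFDerivAt.mul_const _
    exact (hSum.const_sub (q₀ i)).sub (hhd i).hasFDerivAt
  have hKentry : ∀ i j, K q₀ i j = (L i) (Pi.single j 1) := by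
    intro i j
    rw [hK q₀ hq₀ i j, (hFd i).fderiv]
  -- the radial identity: K q₀ *ᵥ w = -(h ζ₀)
  have key : ∀ i, h ζ₀ i + (L i) w = 0 := by
    intro i
    -- real derivative of each building block
    have hMz : ∀ k, HasFDerivAt (fun q => M (z q) i k)
        (((DM i k).restrictScalars ℝ).comp Dz) q₀ := fun k =>
      ((hMd i k).hasFDerivAt.restrictScalars ℝ).comp q₀ hzd
    have hconj : ∀ k : Fin m, HasFDerivAt (fun q : Fin m → ℂ => (starRingEnd ℂ) (q k))
        ((Complex.conjCLE.toContinuousLinearMap).comp (ContinuousLinearMap.proj k)) q₀ := by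
      intro k
      have heq : (fun q : Fin m → ℂ => (starRingEnd ℂ) (q k)) =
          fun q => ((Complex.conjCLE.toContinuousLinearMap).comp
            (ContinuousLinearMap.proj k)) q := by
        funext q; simp
      rw [heq]
      exact ContinuousLinearMap.hasFDerivAt _
    have hhz : HasFDerivAt (fun q => h (z q) i)
        (((Dh i).restrictScalars ℝ).comp Dz) q₀ :=
      ((hhd i).hasFDerivAt.restrictScalars ℝ).comp q₀ hzd
    have htot : HasFDerivAt
        (fun q => q i - (∑ k, M (z q) i k * (starRingEnd ℂ) (q k)) - h (z q) i)
        ((ContinuousLinearMap.proj i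
            - ∑ k, (M ζ₀ i k • ((Complex.conjCLE.toContinuousLinearMap).comp
                  (ContinuousLinearMap.proj k))
                + (starRingEnd ℂ) (q₀ k) • (((DM i k).restrictScalars ℝ).comp Dz)))
          - ((Dh i).restrictScalars ℝ).comp Dz) q₀ := by
      exact ((ContinuousLinearMap.proj i).hasFDerivAt.sub
        (HasFDerivAt.fun_sum fun k _ => (hMz k).mul (hconj k))).sub hhz
    have hev : (fun q => q i - (∑ k, M (z q) i k * (starRingEnd ℂ) (q k)) - h (z q) i)
        =ᶠ[nhds q₀] fun _ => (0 : ℂ) := by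
      filter_upwards [hU.mem_nhds hq₀] with q hq
      have hq' := congrFun (hzF q hq) i
      rw [hF] at hq'
      simpa using hq'
    have hzero : HasFDerivAt
        (fun q => q i - (∑ k, M (z q) i k * (starRingEnd ℂ) (q k)) - h (z q) i)
        (0 : (Fin m → ℂ) →L[ℝ] ℂ) q₀ :=
      (hasFDerivAt_const (0 : ℂ) q₀).congr_of_eventuallyEq hev
    have hTeq := htot.unique hzero
    have e1 := congrArg (fun T : (Fin m → ℂ) →L[ℝ] ℂ => T q₀) hTeq
    simp only [ContinuousLinearMap.sub_apply, ContinuousLinearMap.coe_sum',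
      Finset.sum_apply, ContinuousLinearMap.add_apply, ContinuousLinearMap.smul_apply,
      ContinuousLinearMap.coe_comp', Function.comp_apply,
      ContinuousLinearMap.coe_restrictScalars', ContinuousLinearMap.proj_apply,
      ContinuousLinearEquiv.coe_coe, Complex.conjCLE_apply, smul_eq_mul,
      ContinuousLinearMap.zero_apply] at e1
    -- e1 : q₀ i - ∑ k, (M ζ₀ i k * conj (q₀ k) + conj (q₀ k) * DM i k w) - Dh i w = 0
    have e2 : q₀ i - (∑ k, M ζ₀ i k * (starRingEnd ℂ) (q₀ k)) - h ζ₀ i = 0 := by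
      have hq' := congrFun (hzF q₀ hq₀) i
      rw [hF] at hq'
      simpa using hq'
    have e3 : (L i) w = -(∑ k, (starRingEnd ℂ) (q₀ k) * (DM i k) w) - (Dh i) w := by
      simp [hLdef, smul_eq_mul]
    rw [Finset.sum_add_distrib, ← hwdef] at e1
    rw [e3]
    linear_combination e1 - e2
  have hmv : K q₀ *ᵥ w = -(h ζ₀) := by
    funext i
    have : (K q₀ *ᵥ w) i = ∑ j, K q₀ i j * w j := by
      simp [Matrix.mulVec, dotProduct]
    rw [this]
    have : ∑ j, K q₀ i j * w j = (L i) w := by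
      rw [eval (L i) w]
      refine Finset.sum_congr rfl fun j _ => ?_
      rw [hKentry i j, mul_comm]
    rw [this]
    simp only [Pi.neg_apply]
    linear_combination key i
  -- Cramer's rule
  have hdet : ∀ i : Fin m, (Matrix.updateCol (K q₀) i (h ζ₀)).det = -((K q₀).det * w i) := by
    intro i
    have h1 : (Matrix.updateCol (K q₀) i (h ζ₀)).det = Matrix.cramer (K q₀) (h ζ₀) i :=
      (Matrix.cramer_apply _ _ _).symm
    have h2 : h ζ₀ = -(K q₀ *ᵥ w) := by rw [hmv]; simp
    rw [h1, h2, map_neg]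
    have h3 : Matrix.cramer (K q₀) (K q₀ *ᵥ w) = (K q₀).det • w := by
      rw [Matrix.cramer_eq_adjugate_mulVec, Matrix.mulVec_mulVec, Matrix.adjugate_mul,
        Matrix.smul_mulVec, Matrix.one_mulVec]
    rw [h3]
    simp [smul_eq_mul]
  have hcomp : ∀ i : Fin m, fderiv ℝ (fun q => z q i) q₀ q₀ = w i := by
    intro i
    have hd := HasFDerivAt.comp (𝕜 := ℝ) q₀
      ((ContinuousLinearMap.proj i : (Fin m → ℂ) →L[ℝ] ℂ).hasFDerivAt (x := z q₀)) hzd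
    have hd' : HasFDerivAt (fun q => z q i)
        ((ContinuousLinearMap.proj i : (Fin m → ℂ) →L[ℝ] ℂ).comp Dz) q₀ := hd
    rw [hd'.fderiv]
    rfl
  have main : ∀ i : Fin m,
      (fderiv ℝ (fun q => z q i) q₀ q₀ = 0 ↔
        (Matrix.updateCol (K q₀) i (h ζ₀)).det = 0) := by
    intro i
    rw [hcomp i, hdet i]
    constructor
    · intro hw0; rw [hw0]; ring
    · intro hd0
      have := neg_eq_zero.mp hd0
      rcases mul_eq_zero.mp this with h' | h'
      · exact absurd h' hKinv.ne_zero
      · exact h'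
  exact main _
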